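/- arXiv:1605.05913 — 3 statements merged into one kernel-verified Lean document; each statement's English description precedes it below -/
import Mathlib

section
/- Let δ > 0, C > 0, α > 0, and let f : (0,δ) → ℝ be differentiable with |x·f'(x)| ≤ C·x^α for all x ∈ (0,δ). Let φ(x) = exp(x − 1/x) and choose ε > 0 with φ(ε) ≤ δ. Then the function g = f ∘ φ on (0,ε) satisfies |g'(x)| ≤ C·φ(x)^α·(1 + x^{-2}) for all x ∈ (0,ε), and g'(x) → 0 as x → 0⁺. -/
open Real Filter

-- auxiliary: (1+t^2) * exp (-(t*α)) → 0 at top for α > 0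
lemma aux_tendsto (α : ℝ) (hα : 0 < α) :
    Tendsto (fun t : ℝ => Real.exp (-(t * α)) * (1 + t ^ 2)) atTop (nhds 0) := by
  have h := (tendsto_pow_mul_exp_neg_atTop_nhds_zero 0).add
    ((tendsto_pow_mul_exp_neg_atTop_nhds_zero 2).const_mul (α⁻¹ ^ 2))
  have hcomp := h.comp (tendsto_id.atTop_mul_const hα)
  simp only [add_zero, mul_zero] at hcomp
  refine hcomp.congr' ?_
  filter_upwards [eventually_gt_atTop 0] with t ht
  simp only [Function.comp_apply, id]
  field_simp

lemma aux_deriv (f : ℝ → ℝ) (x : ℝ) (hx : 0 < x)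
    (hfx : DifferentiableAt ℝ f (Real.exp (x - x⁻¹))) :
    deriv (fun y => f (Real.exp (y - y⁻¹))) x
      = deriv f (Real.exp (x - x⁻¹)) * (Real.exp (x - x⁻¹) * (1 + x⁻¹ ^ 2)) := by
  have hx0 : x ≠ 0 := hx.ne'
  have hinner : DifferentiableAt ℝ (fun y : ℝ => y - y⁻¹) x :=
    (differentiableAt_fun_id).sub (differentiableAt_inv hx0)
  have hφ : DifferentiableAt ℝ (fun y => Real.exp (y - y⁻¹)) x := hinner.exp
  have := deriv_comp x hfx hφ
  rw [show (f ∘ fun y => Real.exp (y - y⁻¹)) = (fun y => f (Real.exp (y - y⁻¹))) from rfl] at this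
  rw [this]
  congr 1
  rw [show (fun y : ℝ => Real.exp (y - y⁻¹)) = Real.exp ∘ (fun y : ℝ => y - y⁻¹) from rfl]
  rw [deriv_comp x (Real.differentiableAt_exp) hinner, Real.deriv_exp,
    deriv_fun_sub differentiableAt_fun_id (differentiableAt_inv hx0), deriv_inv, deriv_id'']
  rw [inv_pow]
  ring

/-- If `f : (0,δ) → ℝ` is differentiable with `|x * f' x| ≤ C * x ^ α` on `(0,δ)`, and
`φ x = exp (x - 1/x)` with `φ ε ≤ δ`, then `g = f ∘ φ` satisfies
`|g' x| ≤ C * φ x ^ α * (1 + x⁻²)` on `(0,ε)`, and `g' x → 0` as `x → 0⁺`. -/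
theorem stmt8 (δ C α ε : ℝ) (hδ : 0 < δ) (hC : 0 < C) (hα : 0 < α) (hε : 0 < ε)
    (f : ℝ → ℝ) (hf : ∀ x ∈ Set.Ioo (0:ℝ) δ, DifferentiableAt ℝ f x)
    (hfd : ∀ x ∈ Set.Ioo (0:ℝ) δ, |x * deriv f x| ≤ C * x ^ α)
    (hεδ : Real.exp (ε - ε⁻¹) ≤ δ) :
    (∀ x ∈ Set.Ioo (0:ℝ) ε,
      |deriv (fun y => f (Real.exp (y - y⁻¹))) x|
        ≤ C * (Real.exp (x - x⁻¹)) ^ α * (1 + x⁻¹ ^ 2)) ∧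
    Filter.Tendsto (fun x => deriv (fun y => f (Real.exp (y - y⁻¹))) x)
      (nhdsWithin 0 (Set.Ioi 0)) (nhds 0) := by
  have hmem : ∀ x ∈ Set.Ioo (0:ℝ) ε, Real.exp (x - x⁻¹) ∈ Set.Ioo (0:ℝ) δ := by
    intro x hx
    refine ⟨Real.exp_pos _, lt_of_lt_of_le ?_ hεδ⟩
    have hinv : ε⁻¹ < x⁻¹ := by
      exact (inv_strictAnti₀ hx.1 hx.2)
    exact Real.exp_lt_exp.2 (by linarith [hx.2])
  have hbound : ∀ x ∈ Set.Ioo (0:ℝ) ε,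
      |deriv (fun y => f (Real.exp (y - y⁻¹))) x|
        ≤ C * (Real.exp (x - x⁻¹)) ^ α * (1 + x⁻¹ ^ 2) := by
    intro x hx
    have hm := hmem x hx
    rw [aux_deriv f x hx.1 (hf _ hm)]
    have hpos : (0:ℝ) < 1 + x⁻¹ ^ 2 := by positivity
    have := hfd _ hm
    rw [abs_mul, abs_of_pos (mul_pos (Real.exp_pos _) hpos)]
    rw [abs_mul, abs_of_pos (Real.exp_pos _)] at this
    calc |deriv f (Real.exp (x - x⁻¹))| * (Real.exp (x - x⁻¹) * (1 + x⁻¹ ^ 2))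
        = (Real.exp (x - x⁻¹) * |deriv f (Real.exp (x - x⁻¹))|) * (1 + x⁻¹ ^ 2) := by ring
      _ ≤ (C * Real.exp (x - x⁻¹) ^ α) * (1 + x⁻¹ ^ 2) := by
          exact mul_le_mul_of_nonneg_right this hpos.le
      _ = C * (Real.exp (x - x⁻¹)) ^ α * (1 + x⁻¹ ^ 2) := by ring
  refine ⟨hbound, ?_⟩
  have hTend : Filter.Tendsto (fun x : ℝ => C * (Real.exp (x - x⁻¹)) ^ α * (1 + x⁻¹ ^ 2))
      (nhdsWithin 0 (Set.Ioi 0)) (nhds 0) := by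
    have h1 : Filter.Tendsto (fun x : ℝ => Real.exp (-(x⁻¹ * α)) * (1 + x⁻¹ ^ 2))
        (nhdsWithin 0 (Set.Ioi 0)) (nhds 0) :=
      (aux_tendsto α hα).comp tendsto_inv_nhdsGT_zero
    have h2 : Filter.Tendsto (fun x : ℝ => C * Real.exp (x * α))
        (nhdsWithin 0 (Set.Ioi 0)) (nhds C) := by
      have hc : Continuous (fun x : ℝ => C * Real.exp (x * α)) := by fun_prop
      have h3 : Filter.Tendsto (fun x : ℝ => C * Real.exp (x * α))
          (nhdsWithin 0 (Set.Ioi 0)) (nhds (C * Real.exp (0 * α))) :=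
        (hc.tendsto 0).mono_left nhdsWithin_le_nhds
      simpa using h3
    have := h2.mul h1
    rw [mul_zero] at this
    refine this.congr ?_
    intro x
    have hpow : (Real.exp (x - x⁻¹)) ^ α = Real.exp ((x - x⁻¹) * α) := by
      rw [Real.rpow_def_of_pos (Real.exp_pos _), Real.log_exp]
    rw [hpow, show (x - x⁻¹) * α = x * α + -(x⁻¹ * α) by ring, Real.exp_add]
    ring
  refine squeeze_zero_norm' ?_ hTend
  filter_upwards [self_mem_nhdsWithin, Ioo_mem_nhdsGT_of_mem (by constructor <;> simp [hε] : (0:ℝ) ∈ Set.Ico 0 ε)] with x hx1 hx2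
  exact hbound x hx2
end

section
/- Let φ(x) = exp(x − 1/x) and ψ(x) = (1/2)(log x + √((log x)² + 4)) for x > 0, and define g̃(x,y) = ψ(φ(x)·φ(y)) for x, y > 0. Then g̃(x,y)·(x + y)/(x·y) → 1 as (x,y) → (0,0) with x, y > 0. -/
open Real Filter Set

private lemma key_alg (x y u s : ℝ) (hx : 0 < x) (hy : 0 < y) (hx1 : x < 1) (hy1 : y < 1)
    (hu : u < 0) (huxy : u * (x * y) = (x + y) * (x * y - 1)) (hs0 : 0 ≤ s)
    (hs2 : u ^ 2 * s ^ 2 = u ^ 2 + 4) :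
    (u + -u * s) / 2 * (x + y) / (x * y) = 2 / ((1 - x * y) * (1 + s)) := by
  have hxy1 : x * y < 1 := by nlinarith
  have h1 : (0:ℝ) < 1 - x * y := by linarith
  have h2 : (0:ℝ) < 1 + s := by linarith
  have hune : u ≠ 0 := hu.ne
  field_simp
  linear_combination (u * (1 - s ^ 2)) * huxy + (x * y) * hs2

/-- With `φ x = exp (x - 1/x)` and `ψ x = (log x + √((log x)² + 4))/2`, the function
`g̃ (x,y) = ψ (φ x * φ y)` satisfies `g̃ (x,y) * (x + y) / (x * y) → 1` as
`(x,y) → (0,0)` with `x, y > 0`. -/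
theorem stmt10 :
    Filter.Tendsto (fun p : ℝ × ℝ =>
      ((Real.log (Real.exp (p.1 - p.1⁻¹) * Real.exp (p.2 - p.2⁻¹)) +
        Real.sqrt ((Real.log (Real.exp (p.1 - p.1⁻¹) * Real.exp (p.2 - p.2⁻¹))) ^ 2 + 4)) / 2)
        * (p.1 + p.2) / (p.1 * p.2))
      (nhdsWithin ((0, 0) : ℝ × ℝ) (Set.Ioi 0 ×ˢ Set.Ioi 0)) (nhds 1) := by
  set F := nhdsWithin ((0, 0) : ℝ × ℝ) (Set.Ioi 0 ×ˢ Set.Ioi 0) with hF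
  set U : ℝ × ℝ → ℝ := fun p => (p.1 - p.1⁻¹) + (p.2 - p.2⁻¹) with hU
  -- one-variable limit
  have hone : Tendsto (fun x : ℝ => x - x⁻¹) (nhdsWithin 0 (Ioi 0)) atBot := by
    have h1 : Tendsto (fun x : ℝ => -x⁻¹) (nhdsWithin (0:ℝ) (Ioi 0)) atBot :=
      tendsto_neg_atTop_atBot.comp tendsto_inv_nhdsGT_zero
    have h0 : Tendsto (fun x : ℝ => x) (nhdsWithin (0:ℝ) (Ioi 0)) (nhds 0) :=
      tendsto_id.mono_left nhdsWithin_le_nhds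
    simpa [sub_eq_add_neg] using h0.add_atBot h1
  have hprod : F = (nhdsWithin (0:ℝ) (Ioi 0)) ×ˢ (nhdsWithin (0:ℝ) (Ioi 0)) := by
    rw [hF, nhdsWithin_prod_eq]
  have hfst : Tendsto (fun p : ℝ × ℝ => p.1) F (nhdsWithin (0:ℝ) (Ioi 0)) := by
    rw [hprod]; exact tendsto_fst
  have hsnd : Tendsto (fun p : ℝ × ℝ => p.2) F (nhdsWithin (0:ℝ) (Ioi 0)) := by
    rw [hprod]; exact tendsto_snd
  have hUatBot : Tendsto U F atBot :=
    (hone.comp hfst).atBot_add_atBot (hone.comp hsnd)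
  -- inverse of U tends to 0
  have hv : Tendsto (fun p => (U p)⁻¹) F (nhds 0) := by
    have h1 : Tendsto (fun p => -(U p)) F atTop := tendsto_neg_atBot_atTop.comp hUatBot
    have h2 := h1.inv_tendsto_atTop
    have h3 : Tendsto (fun p => -(-(U p))⁻¹) F (nhds (-0)) := h2.neg
    simpa [inv_neg] using h3
  -- the auxiliary function
  have hsq : Tendsto (fun p => Real.sqrt (1 + 4 * ((U p)⁻¹) ^ 2)) F (nhds 1) := by
    have h1 : Tendsto (fun p => 1 + 4 * ((U p)⁻¹) ^ 2) F (nhds (1 + 4 * 0 ^ 2)) :=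
      tendsto_const_nhds.add ((hv.pow 2).const_mul 4)
    have h2 := (Real.continuous_sqrt.tendsto (1 + 4 * 0 ^ 2)).comp h1
    simpa [Function.comp_def] using h2
  have hxy : Tendsto (fun p : ℝ × ℝ => p.1 * p.2) F (nhds 0) := by
    have := (hfst.mono_right nhdsWithin_le_nhds).mul (hsnd.mono_right nhdsWithin_le_nhds)
    simpa using this
  have hG : Tendsto (fun p : ℝ × ℝ => 2 / ((1 - p.1 * p.2) *
      (1 + Real.sqrt (1 + 4 * ((U p)⁻¹) ^ 2)))) F (nhds 1) := by
    have h1 : Tendsto (fun p : ℝ × ℝ => (1 - p.1 * p.2) *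
        (1 + Real.sqrt (1 + 4 * ((U p)⁻¹) ^ 2))) F (nhds ((1 - 0) * (1 + 1))) :=
      (tendsto_const_nhds.sub hxy).mul (tendsto_const_nhds.add hsq)
    have h2 := (tendsto_const_nhds : Tendsto (fun _ : ℝ × ℝ => (2:ℝ)) F (nhds 2)).div h1 (by norm_num : ((1:ℝ) - 0) * (1 + 1) ≠ 0)
    norm_num at h2
    refine Filter.Tendsto.congr (fun p => ?_) h2
    simp [Pi.div_apply, inv_pow]
  refine hG.congr' ?_ |>.mono_right (le_refl _)
  -- eventually equality
  have hev : ∀ᶠ p : ℝ × ℝ in F, p.1 ∈ Ioo (0:ℝ) 1 ∧ p.2 ∈ Ioo (0:ℝ) 1 := by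
    rw [hprod]
    have e1 : ∀ᶠ x in nhdsWithin (0:ℝ) (Ioi 0), x ∈ Ioo (0:ℝ) 1 :=
      Ioo_mem_nhdsGT (by norm_num)
    exact (e1.prod_inl _).and (e1.prod_inr _)
  filter_upwards [hev] with p hp
  obtain ⟨⟨hx, hx1⟩, ⟨hy, hy1⟩⟩ := hp
  set x := p.1
  set y := p.2
  have hxne : x ≠ 0 := hx.ne'
  have hyne : y ≠ 0 := hy.ne'
  have hxinv : 1 < x⁻¹ := (one_lt_inv₀ hx).mpr hx1
  have hyinv : 1 < y⁻¹ := (one_lt_inv₀ hy).mpr hy1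
  have hu0 : U p < 0 := by
    simp only [hU]
    nlinarith
  have hune : U p ≠ 0 := hu0.ne
  have hlog : Real.log (Real.exp (x - x⁻¹) * Real.exp (y - y⁻¹)) = U p := by
    rw [← Real.exp_add, Real.log_exp]
  have h4 : (U p) ^ 2 + 4 = (U p) ^ 2 * (1 + 4 * ((U p)⁻¹) ^ 2) := by
    field_simp
  have hsqrt : Real.sqrt ((U p) ^ 2 + 4) = -(U p) * Real.sqrt (1 + 4 * ((U p)⁻¹) ^ 2) := by
    rw [h4, Real.sqrt_mul (sq_nonneg _), Real.sqrt_sq_eq_abs, abs_of_neg hu0]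
  have hs2 : (U p) ^ 2 * (Real.sqrt (1 + 4 * ((U p)⁻¹) ^ 2)) ^ 2 = (U p) ^ 2 + 4 := by
    rw [Real.sq_sqrt (by positivity)]
    field_simp
  have huxy : U p * (x * y) = (x + y) * (x * y - 1) := by
    simp only [hU]
    change (x - x⁻¹ + (y - y⁻¹)) * (x * y) = _
    field_simp
    ring
  calc 2 / ((1 - x * y) * (1 + Real.sqrt (1 + 4 * ((U p)⁻¹) ^ 2)))
      = (U p + -(U p) * Real.sqrt (1 + 4 * ((U p)⁻¹) ^ 2)) / 2 * (x + y) / (x * y) :=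
        (key_alg x y (U p) _ hx hy hx1 hy1 hu0 huxy (Real.sqrt_nonneg _) hs2).symm
    _ = _ := by rw [← hsqrt, ← hlog]
end

section
/- Let c : (0,1) → ℝ be differentiable and bounded on (0,1/2), and suppose x·c'(x) → L as x → 0⁺ for some real L. Then L = 0. -/
private lemma stmt15_key (c : ℝ → ℝ)
    (hdiff : ∀ x ∈ Set.Ioo (0:ℝ) 1, DifferentiableAt ℝ c x)
    (hbdd : ∃ M : ℝ, ∀ x ∈ Set.Ioo (0:ℝ) (1/2), |c x| ≤ M)
    (L : ℝ) (hL : 0 < L)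
    (hlim : Filter.Tendsto (fun x => x * deriv c x)
      (nhdsWithin 0 (Set.Ioi 0)) (nhds L)) : False := by
  obtain ⟨M, hM⟩ := hbdd
  rw [Metric.tendsto_nhdsWithin_nhds] at hlim
  obtain ⟨δ, hδpos, hδ⟩ := hlim (L/2) (by linarith)
  set δ' : ℝ := min δ (1/2) with hδ'def
  have hδ'pos : 0 < δ' := lt_min hδpos (by norm_num)
  have hδ'le : δ' ≤ 1/2 := min_le_right _ _
  -- On (0, δ'), deriv c x > L/(2x)
  have hderiv : ∀ x ∈ Set.Ioo (0:ℝ) δ', L / 2 * x⁻¹ < deriv c x := by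
    intro x ⟨hx0, hxδ⟩
    have h1 : dist x 0 < δ := by
      rw [Real.dist_eq, sub_zero, abs_of_pos hx0]
      exact hxδ.trans_le (min_le_left _ _)
    have h2 := hδ hx0 h1
    rw [Real.dist_eq] at h2
    have h3 : L / 2 < x * deriv c x := by
      have := abs_lt.mp h2
      linarith [this.1]
    rw [show L / 2 * x⁻¹ = L / 2 / x from by ring, div_lt_iff₀ hx0]
    nlinarith
  set b : ℝ := δ' / 2 with hbdef
  have hb0 : 0 < b := by positivity
  have hbδ : b < δ' := by simp [hbdef]; linarith
  have hbhalf : b < 1/2 := hbδ.trans_le hδ'le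
  set t : ℝ := 2 / L * (-M - 1 - c b) + Real.log b with htdef
  set a : ℝ := min (Real.exp t) (b / 2) with hadef
  have ha0 : 0 < a := lt_min (Real.exp_pos t) (by positivity)
  have hab : a < b := (min_le_right _ _).trans_lt (by linarith)
  have hlog : Real.log a ≤ t := by
    calc Real.log a ≤ Real.log (Real.exp t) :=
          Real.log_le_log ha0 (min_le_left _ _)
      _ = t := Real.log_exp t
  -- φ := c - (L/2) log is strictly monotone on [a, b]
  set φ : ℝ → ℝ := fun x => c x - L / 2 * Real.log x with hφdef
  have hsub : Set.Icc a b ⊆ Set.Ioo (0:ℝ) 1 := fun x hx =>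
    ⟨lt_of_lt_of_le ha0 hx.1, lt_of_le_of_lt hx.2 (by linarith)⟩
  have hmono : StrictMonoOn φ (Set.Icc a b) := by
    apply strictMonoOn_of_deriv_pos (convex_Icc a b)
    · apply ContinuousOn.sub
      · exact fun x hx => ((hdiff x (hsub hx)).continuousAt).continuousWithinAt
      · exact (continuousOn_const.mul
          (Real.continuousOn_log.mono (fun x hx => ne_of_gt (lt_of_lt_of_le ha0 hx.1))))
    · intro x hx
      rw [interior_Icc] at hx
      have hx0 : 0 < x := lt_of_lt_of_le ha0 hx.1.le
      have hdc : DifferentiableAt ℝ c x := hdiff x (hsub ⟨hx.1.le, hx.2.le⟩)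
      have hdl : DifferentiableAt ℝ Real.log x := Real.differentiableAt_log (ne_of_gt hx0)
      have : deriv φ x = deriv c x - L / 2 * x⁻¹ := by
        rw [hφdef]
        rw [deriv_fun_sub hdc ((hdl.const_mul _))]
        rw [deriv_const_mul _ hdl, Real.deriv_log]
      rw [this, sub_pos]
      exact hderiv x ⟨hx0, hx.2.trans hbδ⟩
  have hφab : φ a < φ b :=
    hmono (Set.left_mem_Icc.mpr hab.le) (Set.right_mem_Icc.mpr hab.le) hab
  -- compute contradiction
  have hca : c a < c b + L / 2 * (Real.log a - Real.log b) := by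
    simp only [hφdef] at hφab; linarith
  have hbound : L / 2 * (Real.log a - Real.log b) ≤ -M - 1 - c b := by
    have h1 : Real.log a - Real.log b ≤ 2 / L * (-M - 1 - c b) := by
      have := hlog; rw [htdef] at this; linarith
    have h2 : L / 2 * (Real.log a - Real.log b) ≤ L / 2 * (2 / L * (-M - 1 - c b)) :=
      mul_le_mul_of_nonneg_left h1 (by linarith)
    have h3 : L / 2 * (2 / L * (-M - 1 - c b)) = -M - 1 - c b := by
      field_simp
    linarith
  have hca2 : c a < -M - 1 := by linarith
  have := hM a ⟨ha0, by linarith [hbhalf]⟩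
  have := abs_le.mp this
  linarith [this.1]

/-- If `c : (0,1) → ℝ` is differentiable, bounded on `(0,1/2)`, and `x * c' x → L` as
`x → 0⁺`, then `L = 0`. -/
theorem stmt15 (c : ℝ → ℝ)
    (hdiff : ∀ x ∈ Set.Ioo (0:ℝ) 1, DifferentiableAt ℝ c x)
    (hbdd : ∃ M : ℝ, ∀ x ∈ Set.Ioo (0:ℝ) (1/2), |c x| ≤ M)
    (L : ℝ)
    (hlim : Filter.Tendsto (fun x => x * deriv c x)
      (nhdsWithin 0 (Set.Ioi 0)) (nhds L)) :
    L = 0 := by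
  rcases lt_trichotomy L 0 with hL | hL | hL
  · exfalso
    obtain ⟨M, hM⟩ := hbdd
    apply stmt15_key (fun x => -c x)
      (fun x hx => (hdiff x hx).neg)
      ⟨M, fun x hx => by simpa using hM x hx⟩
      (-L) (by linarith)
    have : (fun x => x * deriv (fun y => -c y) x) = fun x => -(x * deriv c x) := by
      funext x; rw [deriv.fun_neg]; ring
    rw [this]
    exact hlim.neg
  · exact hL
  · exact absurd (stmt15_key c hdiff hbdd L hL hlim) id
end
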